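/- Suppose q₁ = 2N for a natural number N, and the coefficients c₀,…,c_N satisfy the recurrence n(n−1+p₀)c_n + (p₁(n−1)+q₀)c_{n−1} + (−2(n−2)+2N)c_{n−2} = 0 for 2 ≤ n ≤ N, the initial condition p₀ c₁ + q₀ c₀ = 0, and the terminal conditions (N+1)(N+p₀)·0 + (p₁ N + q₀)c_N + (−2(N−1)+2N)c_{N−1} = 0 and (−2N+2N)c_N = 0 trivially; then the polynomial Φ(z) = Σ_{n=0}^N c_n (sz)^n solves the biconfluent Heun equation z Φ'' + (p₀ + p₁ s z − 2 s² z²) Φ' + (q₀ s + 2N s² z) Φ = 0. -/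

import Mathlib

open Polynomial Finset

/-- when `q₁ = 2N` and the coefficients satisfy the terminated recurrence,
the polynomial `Φ(z) = Σ_{n=0}^N c_n (sz)^n` solves the biconfluent Heun equation. -/
theorem bhe_polynomial_solution (p₀ p₁ q₀ : ℂ) (s : ℂ) (hs : s ≠ 0) (N : ℕ) (hN : 1 ≤ N)
    (c : ℕ → ℂ)
    (hrec : ∀ n : ℕ, 2 ≤ n → n ≤ N →
      (n : ℂ) * ((n : ℂ) - 1 + p₀) * c n + (p₁ * ((n : ℂ) - 1) + q₀) * c (n - 1)
        + (-2 * ((n : ℂ) - 2) + 2 * (N : ℂ)) * c (n - 2) = 0)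
    (hinit : p₀ * c 1 + q₀ * c 0 = 0)
    (hterm : (p₁ * (N : ℂ) + q₀) * c N + (-2 * ((N : ℂ) - 1) + 2 * (N : ℂ)) * c (N - 1) = 0)
    (Φ : ℂ → ℂ) (hΦ : Φ = fun z => ∑ n ∈ Finset.range (N + 1), c n * (s * z) ^ n) :
    ∀ z : ℂ, z * deriv (deriv Φ) z + (p₀ + p₁ * s * z - 2 * s ^ 2 * z ^ 2) * deriv Φ z
      + (q₀ * s + 2 * (N : ℂ) * s ^ 2 * z) * Φ z = 0 := by
  set P : ℂ[X] := ∑ n ∈ Finset.range (N + 1), C (c n * s ^ n) * X ^ n with hP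
  have hPc : ∀ k : ℕ, P.coeff k = if k ≤ N then c k * s ^ k else 0 := by
    intro k
    rw [hP, Polynomial.finset_sum_coeff]
    simp only [Polynomial.coeff_C_mul, Polynomial.coeff_X_pow, mul_ite, mul_one, mul_zero]
    rw [Finset.sum_ite_eq (Finset.range (N + 1)) k fun n => c n * s ^ n]
    simp [Nat.lt_succ_iff]
  have hfun : Φ = fun z => P.eval z := by
    funext z
    simp only [hΦ, hP, Polynomial.eval_finset_sum, Polynomial.eval_mul, Polynomial.eval_C,
      Polynomial.eval_pow, Polynomial.eval_X, mul_pow]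
    exact Finset.sum_congr rfl fun n _ => by ring
  have hd1 : deriv Φ = fun z => P.derivative.eval z := by
    funext z; rw [hfun]; exact P.deriv
  have hd2 : deriv (deriv Φ) = fun z => P.derivative.derivative.eval z := by
    funext z; rw [hd1]; exact P.derivative.deriv
  have key : X * P.derivative.derivative + C p₀ * P.derivative
      + C (p₁ * s) * (X * P.derivative) - C (2 * s ^ 2) * (X * (X * P.derivative))
      + C (q₀ * s) * P + C (2 * (N : ℂ) * s ^ 2) * (X * P) = 0 := by
    ext k
    match k with
    | 0 =>
      simp only [Polynomial.coeff_add, Polynomial.coeff_sub, Polynomial.coeff_C_mul,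
        Polynomial.mul_coeff_zero, Polynomial.coeff_X_zero, Polynomial.coeff_derivative,
        zero_mul, mul_zero, Polynomial.coeff_zero, Polynomial.coeff_C_zero, hPc]
      rw [if_pos hN, if_pos (by omega : 0 ≤ N)]
      push_cast
      linear_combination s * hinit
    | (m+1) =>
      simp only [Polynomial.coeff_add, Polynomial.coeff_sub, Polynomial.coeff_C_mul,
        Polynomial.coeff_X_mul, Polynomial.coeff_derivative, Polynomial.coeff_zero]
      match m with
      | 0 =>
        simp only [Polynomial.mul_coeff_zero, Polynomial.coeff_X_zero, zero_mul, mul_zero,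
          Polynomial.coeff_C_zero, Polynomial.coeff_derivative, hPc]
        rcases Nat.lt_or_ge N 2 with h2 | h2
        · have hN1 : N = 1 := by omega
          subst hN1
          rw [if_neg (by omega), if_pos (by omega), if_pos (by omega)]
          push_cast at hterm ⊢
          norm_num at hterm
          linear_combination s ^ 2 * hterm
        · rw [if_pos h2, if_pos (by omega : 1 ≤ N), if_pos (by omega : 0 ≤ N)]
          have h := hrec 2 (by omega) h2
          push_cast at h
          norm_num at h
          push_cast
          linear_combination s ^ 2 * h
      | (j+1) =>
        simp only [Polynomial.coeff_X_mul, Polynomial.coeff_derivative, hPc]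
        split_ifs with h1 h2 h3 h2 h3 h3
        all_goals try { exfalso; omega }
        · -- j+3 ≤ N
          have h := hrec (j+3) (by omega) (by omega)
          have e1 : j + 3 - 1 = j + 2 := by omega
          have e2 : j + 3 - 2 = j + 1 := by omega
          rw [e1, e2] at h
          push_cast at h ⊢
          linear_combination s ^ (j+3) * h
        · -- j+2 = N
          have hNe : N = j + 2 := by omega
          subst hNe
          have e1 : j + 2 - 1 = j + 1 := by omega
          rw [e1] at hterm
          push_cast at hterm ⊢
          linear_combination s ^ (j+3) * hterm
        · -- j+1 = N
          have hNe : N = j + 1 := by omega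
          subst hNe
          push_cast
          ring
        · push_cast; ring
  intro z
  have hz := congrArg (Polynomial.eval z) key
  simp only [Polynomial.eval_add, Polynomial.eval_sub, Polynomial.eval_mul, Polynomial.eval_C,
    Polynomial.eval_X, Polynomial.eval_zero] at hz
  rw [hd2, hd1, hfun]
  linear_combination hz
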